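/- Fix q_H* > 0 and bounded quantity set [q_L*, q̄] with q̄ > q_H*. Suppose (θ_L^n) is a sequence of low-type marginal costs with θ_L^n → θ_H, so that q_L*(θ_L^n) → q_H*. If q̃^n ∈ [q_L*(θ_L^n), q̄] satisfies π_L^n(q_L*^n) - π_H(q_H*) ≥ ln(q̃^n/(q̃^n - q_H*))·[π_L^n(q_L*^n) - π_H(q̃^n)] for all n, then q̃^n → q_H* and ln(q̃^n/(q̃^n - q_H*)) → ∞, while the constraint π_L^n(q_L*^n) - π_H(q_H*) < π_L^n(q_L*^n) - π_H(q̃^n) forces limsup_n ln(q̃^n/(q̃^n - q_H*)) ≤ 1, a contradiction. Conclude: there exists θ₂ < θ_H such that for θ_L > θ₂, for all q̃ ∈ [q_L*, q̄]: π_L(q_L*) - π_H(q_H*) < ln(ΔC(q̃)/(ΔC(q̃) - ΔC(q_H*)))·[π_L(q_L*) - π_H(q̃)]. -/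

import Mathlib

open Filter

/-- Non-revelation for nearly homogeneous types. With linear costs
`C_θ(q) = θq` so that `ΔC(q̃)/(ΔC(q̃)-ΔC(q_H*)) = q̃/(q̃ - q_H*)`, where
`qstar θ` is the surplus maximizer of `π_θ(q) = v(q) - θq` on `[0, q̄]`,
`q_H* = qstar θ_H` is the unique high-type maximizer, `qstar θ ∈ (q_H*, q̄)`
for `θ < θ_H`, and `qstar θ → q_H*` as `θ ↑ θ_H`: there exists `θ₂ < θ_H`
such that for all `θ_L ∈ (θ₂, θ_H)` and all `q̃ ∈ [qstar θ_L, q̄]`,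
`π_L(q_L*) - π_H(q_H*) < ln(q̃/(q̃-q_H*)) · [π_L(q_L*) - π_H(q̃)]`. -/
theorem stmt_11 (v : ℝ → ℝ) (θH qbar : ℝ) (qstar : ℝ → ℝ)
    (hθH : 0 < θH) (hv : Continuous v)
    (hmax : ∀ θ ∈ Set.Ioo (0:ℝ) θH, ∀ q ∈ Set.Icc (0:ℝ) qbar,
      v q - θ * q ≤ v (qstar θ) - θ * qstar θ)
    (hmem : ∀ θ ∈ Set.Ioo (0:ℝ) θH, qstar θ ∈ Set.Ioo (qstar θH) qbar)
    (hHpos : 0 < qstar θH) (hHbar : qstar θH < qbar)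
    (hHuniq : ∀ q ∈ Set.Icc (0:ℝ) qbar, q ≠ qstar θH →
      v q - θH * q < v (qstar θH) - θH * qstar θH)
    (hcont : Tendsto qstar (nhdsWithin θH (Set.Ioo 0 θH)) (nhds (qstar θH))) :
    ∃ θ₂ ∈ Set.Ioo (0:ℝ) θH, ∀ θL ∈ Set.Ioo θ₂ θH, ∀ qt ∈ Set.Icc (qstar θL) qbar,
      (v (qstar θL) - θL * qstar θL) - (v (qstar θH) - θH * qstar θH) <
        Real.log (qt / (qt - qstar θH)) * ((v (qstar θL) - θL * qstar θL) - (v qt - θH * qt)) := by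
  set qH := qstar θH with hqH
  set M := v qH - θH * qH with hM
  have hE1 : (1:ℝ) < Real.exp 1 := by
    have := Real.add_one_lt_exp (x := 1) one_ne_zero
    linarith
  set e := Real.exp 1 with he
  set qc := qH * e / (e - 1) with hqc
  have hqcH : qH < qc := by
    rw [hqc, lt_div_iff₀ (by linarith)]
    nlinarith
  -- minimum of f q = M - (v q - θH * q) on K
  set f : ℝ → ℝ := fun q => M - (v q - θH * q) with hf
  set K := Set.Icc (min qc qbar) qbar with hK
  have hKne : K.Nonempty := Set.nonempty_Icc.2 (min_le_right _ _)
  have hKcpt : IsCompact K := isCompact_Icc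
  have hfc : ContinuousOn f K := (Continuous.sub continuous_const
    ((hv.sub (continuous_const.mul continuous_id)))).continuousOn
  obtain ⟨q0, hq0K, hq0min⟩ := hKcpt.exists_isMinOn hKne hfc
  set ε := f q0 with hε
  have hminpos : qH < min qc qbar := lt_min hqcH hHbar
  have hεpos : 0 < ε := by
    have hq0H : qH < q0 := lt_of_lt_of_le hminpos hq0K.1
    have := hHuniq q0 ⟨by linarith, hq0K.2⟩ (by intro h; rw [h] at hq0H; exact lt_irrefl _ hq0H)
    simp only [hε, hf]
    linarith
  set L0 := Real.log (qbar / (qbar - qH)) with hL0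
  have hL0pos : 0 < L0 := by
    apply Real.log_pos
    rw [lt_div_iff₀ (by linarith)]
    nlinarith
  -- tendsto of the low-type rent
  have htend : Tendsto (fun θ => (v (qstar θ) - θ * qstar θ) - M)
      (nhdsWithin θH (Set.Ioo 0 θH)) (nhds 0) := by
    have h1 : Tendsto (fun θ => v (qstar θ) - θ * qstar θ)
        (nhdsWithin θH (Set.Ioo 0 θH)) (nhds (v qH - θH * qH)) := by
      exact Tendsto.sub (hv.continuousAt.tendsto.comp hcont)
        (Tendsto.mul (tendsto_nhdsWithin_of_tendsto_nhds tendsto_id) hcont)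
    have := h1.sub (tendsto_const_nhds (x := M))
    rw [← hM, sub_self] at this; exact this
  have hev : ∀ᶠ θ in nhdsWithin θH (Set.Ioo 0 θH),
      (v (qstar θ) - θ * qstar θ) - M < L0 * ε := by
    have := htend (Iio_mem_nhds (show (0:ℝ) < L0 * ε from mul_pos hL0pos hεpos))
    filter_upwards [this] with θ hθ using hθ
  rw [eventually_iff, Metric.mem_nhdsWithin_iff] at hev
  obtain ⟨δ, hδpos, hδ⟩ := hev
  refine ⟨max (θH - δ/2) (θH/2), ⟨lt_max_of_lt_right (by linarith), max_lt (by linarith) (by linarith)⟩, ?_⟩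
  intro θL hθL qt hqt
  have hθL2 : θL ∈ Set.Ioo (0:ℝ) θH := ⟨lt_of_lt_of_le (by linarith) (le_of_lt (lt_of_le_of_lt (le_max_right _ _) hθL.1)), hθL.2⟩
  have hθLball : θL ∈ Metric.ball θH δ := by
    rw [Metric.mem_ball, Real.dist_eq, abs_sub_lt_iff]
    constructor
    · linarith [hθL2.2]
    · have := lt_of_le_of_lt (le_max_left (θH - δ/2) (θH/2)) hθL.1
      linarith
  have hxs : (v (qstar θL) - θL * qstar θL) - M < L0 * ε := hδ ⟨hθLball, hθL2⟩
  set qL := qstar θL with hqL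
  have hqLm : qL ∈ Set.Ioo qH qbar := hmem θL hθL2
  set x := (v qL - θL * qL) - M with hx
  have hxpos : 0 < x := by
    have h1 : v qH - θL * qH ≤ v qL - θL * qL :=
      hmax θL hθL2 qH ⟨le_of_lt hHpos, le_of_lt hHbar⟩
    have : 0 < (θH - θL) * qH := mul_pos (by linarith [hθL2.2]) hHpos
    simp only [hx, hM]
    nlinarith
  have hqtH : qH < qt := lt_of_lt_of_le hqLm.1 hqt.1
  have hqtbar : qt ≤ qbar := hqt.2
  have hqtpos : 0 < qt := lt_trans hHpos hqtH
  have hden : 0 < qt - qH := by linarith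
  -- factor F = x + f qt, f qt > 0
  have hfqt : 0 < f qt := by
    have := hHuniq qt ⟨le_of_lt hqtpos, hqtbar⟩ (by intro h; rw [h] at hqtH; exact lt_irrefl _ hqtH)
    simp only [hf]; linarith
  have hFeq : (v qL - θL * qL) - (v qt - θH * qt) = x + f qt := by
    simp only [hx, hf, hM]; ring
  rw [hFeq]
  by_cases hcase : qt ≤ qc
  · -- log ratio ≥ 1
    have hr : e ≤ qt / (qt - qH) := by
      rw [le_div_iff₀ hden]
      have : qt * (e - 1) ≤ qH * e := by
        rw [hqc, le_div_iff₀ (by linarith)] at hcase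
        linarith
      nlinarith
    have hlog : 1 ≤ Real.log (qt / (qt - qH)) := by
      have := Real.log_le_log (Real.exp_pos 1) hr
      rwa [Real.log_exp] at this
    calc x < x + f qt := by linarith
      _ ≤ Real.log (qt / (qt - qH)) * (x + f qt) :=
          le_mul_of_one_le_left (by linarith) hlog
  · -- qt ∈ K, so f qt ≥ ε and log ratio ≥ L0
    push_neg at hcase
    have hqtK : qt ∈ K := ⟨le_trans (min_le_left _ _) (le_of_lt hcase), hqtbar⟩
    have hfε : ε ≤ f qt := hq0min hqtK
    have hr : qbar / (qbar - qH) ≤ qt / (qt - qH) := by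
      rw [div_le_div_iff₀ (by linarith) hden]
      nlinarith
    have hlog : L0 ≤ Real.log (qt / (qt - qH)) :=
      Real.log_le_log (div_pos (by linarith) (by linarith)) hr
    have hF : x + ε ≤ x + f qt := by linarith
    have h1 : L0 * (x + ε) ≤ Real.log (qt / (qt - qH)) * (x + f qt) := by
      apply mul_le_mul hlog hF (by linarith) (le_trans (le_of_lt hL0pos) hlog)
    nlinarith
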